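/- There exists a bijection ψ : S_n(M, I) → S_n(M, I) (for any M, I ⊆ [n] with |M| = |I|, n ∈ M ∩ I) which is an involution satisfying (ca(π), ci(π)) = (ci(ψ(π)), ca(ψ(π))) for all π, and which fixes the number |A⁻(π)| of non-inversions not contained in any occurrence of 123. Consequently the statistic mix(π) = |A⁻(π)| + |I⁺(π)| is Mahonian, i.e., equidistributed with the number of inversions over S_n. -/

import Mathlib

open Finset

/-- `τ ∈ S_n(M, I)`: the right-to-left maxima of `τ` occur exactly at the positions
in `I`, and the set of their values is `M`. -/
def SMI {n : ℕ} (M I : Finset (Fin n)) (τ : Equiv.Perm (Fin n)) : Prop :=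
  (∀ j : Fin n, ((∀ i : Fin n, j < i → τ i < τ j) ↔ j ∈ I)) ∧ I.image τ = M

/-- `ci(τ)(y) = |I⁺_y|`: the number of values `x` with `(y, x)` an inversion of `τ`
playing the role of `21` in some occurrence of `213`. -/
def ci {n : ℕ} (τ : Equiv.Perm (Fin n)) (y : Fin n) : ℕ :=
  (univ.filter fun x : Fin n =>
    τ.symm y < τ.symm x ∧ x < y ∧ ∃ z : Fin n, τ.symm x < τ.symm z ∧ y < z).card

/-- `ca(τ)(y) = |A⁺_y|`: the number of values `x` with `(x, y)` a non-inversion of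
`τ` playing the role of `12` in some occurrence of `123`. -/
def ca {n : ℕ} (τ : Equiv.Perm (Fin n)) (y : Fin n) : ℕ :=
  (univ.filter fun x : Fin n =>
    τ.symm x < τ.symm y ∧ x < y ∧ ∃ z : Fin n, τ.symm y < τ.symm z ∧ y < z).card

/-- `|A⁻(τ)|`: the number of non-inversions of `τ` (pairs of positions `i < j` with
`τ(i) < τ(j)`) that do not play the role of `12` in any occurrence of `123`. -/
def Aminus {n : ℕ} (τ : Equiv.Perm (Fin n)) : ℕ :=
  (univ.filter fun p : Fin n × Fin n =>
    p.1 < p.2 ∧ τ p.1 < τ p.2 ∧ ¬ ∃ k : Fin n, p.2 < k ∧ τ p.2 < τ k).card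

/-- `|I⁺(τ)|`: the number of inversions of `τ` playing the role of `21` in some
occurrence of `213`. -/
def Iplus {n : ℕ} (τ : Equiv.Perm (Fin n)) : ℕ :=
  (univ.filter fun p : Fin n × Fin n =>
    p.1 < p.2 ∧ τ p.2 < τ p.1 ∧ ∃ k : Fin n, p.2 < k ∧ τ p.1 < τ k).card

namespace MixProof

variable {n : ℕ} {M I : Finset (Fin n)} {τ τ' σ σ' π : Equiv.Perm (Fin n)}
  {a b v w x y j p q : Fin n}

/-- simplified `ca`: number of smaller values to the left. -/
def caS (τ : Equiv.Perm (Fin n)) (v : Fin n) : ℕ :=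
  (univ.filter fun x : Fin n => x < v ∧ τ.symm x < τ.symm v).card

/-- the position (as a natural number) of the last right-to-left maximum whose
value exceeds `v`. -/
def Lv (I : Finset (Fin n)) (τ : Equiv.Perm (Fin n)) (v : Fin n) : ℕ :=
  (I.filter fun j => v < τ j).sup fun j => (j : ℕ)

/-- simplified `ci`: number of smaller values to the right, before position `Lv`. -/
def ciP (I : Finset (Fin n)) (τ : Equiv.Perm (Fin n)) (v : Fin n) : ℕ :=
  (univ.filter fun x : Fin n =>
    x < v ∧ τ.symm v < τ.symm x ∧ ((τ.symm x : ℕ) < Lv I τ v)).card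

lemma smi_lt (h : SMI M I τ) (hj : v ∈ I) (hij : v < p) : τ p < τ v :=
  (h.1 v).2 hj p hij

lemma mem_M_iff (h : SMI M I τ) : v ∈ M ↔ τ.symm v ∈ I := by
  rw [← h.2]
  constructor
  · rintro hv
    obtain ⟨j, hj, rfl⟩ := Finset.mem_image.1 hv
    simpa using hj
  · intro hv
    exact Finset.mem_image.2 ⟨τ.symm v, hv, by simp⟩

lemma exists_gt (h : SMI M I τ) (hp : p ∉ I) : ∃ q, p < q ∧ τ p < τ q := by
  by_contra hc
  push_neg at hc
  exact hp ((h.1 p).1 fun i hi => by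
    rcases lt_or_eq_of_le (hc i hi) with h' | h'
    · exact h'
    · exact absurd (τ.injective h') (by omega))

lemma exists_L (h : SMI M I τ) (hv : v ∉ M) :
    ∃ j, j ∈ I ∧ τ.symm v < j ∧ v < τ j := by
  have hp : τ.symm v ∉ I := fun hc => hv ((mem_M_iff h).2 hc)
  obtain ⟨q, hq1, hq2⟩ := exists_gt h hp
  rw [Equiv.apply_symm_apply] at hq2
  set S : Finset (Fin n) := univ.filter fun q => τ.symm v < q ∧ v < τ q with hS
  have hSne : S.Nonempty := ⟨q, by simp [hS, hq1, hq2]⟩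
  refine ⟨S.max' hSne, ?_, ?_, ?_⟩
  · apply (h.1 _).1
    intro i hi
    by_contra hczero
    have hne : τ i ≠ τ (S.max' hSne) := fun hc => by
      have := τ.injective hc; omega
    have hgt : τ (S.max' hSne) < τ i := by
      rcases lt_trichotomy (τ i) (τ (S.max' hSne)) with h' | h' | h'
      · exact absurd h' hczero
      · exact absurd h' hne
      · exact h'
    have hmem := (Finset.mem_filter.1 (S.max'_mem hSne)).2
    have : i ∈ S := by
      simp only [hS, mem_filter, mem_univ, true_and]
      exact ⟨lt_trans hmem.1 hi, lt_trans hmem.2 hgt⟩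
    exact absurd (S.le_max' i this) (by omega)
  · exact (Finset.mem_filter.1 (S.max'_mem hSne)).2.1
  · exact (Finset.mem_filter.1 (S.max'_mem hSne)).2.2

lemma le_Lv (hj : p ∈ I) (hvj : v < τ p) : (p : ℕ) ≤ Lv I τ v :=
  Finset.le_sup (Finset.mem_filter.2 ⟨hj, hvj⟩)

lemma Lv_mem (h : SMI M I τ) (hv : v ∉ M) :
    ∃ j, j ∈ I ∧ (j : ℕ) = Lv I τ v ∧ v < τ j := by
  obtain ⟨j, hj, _, hvj⟩ := exists_L h hv
  obtain ⟨b, hb, hbe⟩ := Finset.exists_mem_eq_sup (I.filter fun j => v < τ j)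
    ⟨j, Finset.mem_filter.2 ⟨hj, hvj⟩⟩ fun j => (j : ℕ)
  exact ⟨b, (Finset.mem_filter.1 hb).1, hbe.symm, (Finset.mem_filter.1 hb).2⟩

lemma pos_lt_Lv (h : SMI M I τ) (hv : v ∉ M) : (τ.symm v : ℕ) < Lv I τ v := by
  obtain ⟨j, hj, hlt, hvj⟩ := exists_L h hv
  exact lt_of_lt_of_le hlt (le_Lv hj hvj)

lemma Lv_anti (hvw : v ≤ w) : Lv I τ w ≤ Lv I τ v := by
  apply Finset.sup_le
  intro j hj
  rw [Finset.mem_filter] at hj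
  exact Finset.le_sup (Finset.mem_filter.2 ⟨hj.1, lt_of_le_of_lt hvw hj.2⟩)

lemma M_pos_gt (h : SMI M I τ) (hx : x ∈ M) (hv : v ∉ M) (hxv : x < v) :
    Lv I τ v < (τ.symm x : ℕ) := by
  have hi : τ.symm x ∈ I := (mem_M_iff h).1 hx
  obtain ⟨j, hj, hje, hvj⟩ := Lv_mem h hv
  by_contra hc
  push_neg at hc
  rw [← hje] at hc
  have : τ.symm x = j ∨ τ.symm x < j := by
    rcases lt_trichotomy (τ.symm x) j with h' | h' | h'
    · exact Or.inr h'
    · exact Or.inl h'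
    · exact absurd hc (by rw [Fin.lt_def] at h'; omega)
  rcases this with h' | h'
  · have hxj : x = τ j := by conv_lhs => rw [← τ.apply_symm_apply x, h']
    rw [hxj] at hxv
    exact absurd hvj (lt_asymm hxv)
  · have := smi_lt h hi h'
    rw [Equiv.apply_symm_apply] at this
    have : (τ j : ℕ) < x := this
    have : (v:ℕ) < τ j := hvj
    omega

lemma gt_pos_le_Lv (h : SMI M I τ) (hv : v ∉ M) (hvx : v < x) :
    (τ.symm x : ℕ) ≤ Lv I τ v := by
  by_cases hx : x ∈ M
  · have hi : τ.symm x ∈ I := (mem_M_iff h).1 hx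
    exact le_Lv hi (by rw [Equiv.apply_symm_apply]; exact hvx)
  · exact le_of_lt (lt_of_lt_of_le (pos_lt_Lv h hx) (Lv_anti (le_of_lt hvx)))

lemma ca_eq_caS (h : SMI M I τ) (hv : v ∉ M) : ca τ v = caS τ v := by
  unfold ca caS
  congr 1
  apply Finset.filter_congr
  intro x _
  constructor
  · rintro ⟨h1, h2, _⟩; exact ⟨h2, h1⟩
  · rintro ⟨h1, h2⟩
    obtain ⟨j, hj, hpj, hvj⟩ := exists_L h hv
    exact ⟨h2, h1, τ j, by simpa using hpj, hvj⟩

lemma ci_eq_ciP (h : SMI M I τ) (hv : v ∉ M) : ci τ v = ciP I τ v := by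
  unfold ci ciP
  congr 1
  apply Finset.filter_congr
  intro x _
  constructor
  · rintro ⟨h1, h2, z, hz1, hz2⟩
    refine ⟨h2, h1, ?_⟩
    by_cases hz : z ∈ M
    · have hiz : τ.symm z ∈ I := (mem_M_iff h).1 hz
      have : (τ.symm z : ℕ) ≤ Lv I τ v :=
        le_Lv hiz (by rw [Equiv.apply_symm_apply]; exact hz2)
      have : (τ.symm x : ℕ) < (τ.symm z : ℕ) := hz1
      omega
    · have h1' : (τ.symm z : ℕ) < Lv I τ z := pos_lt_Lv h hz
      have h2' : Lv I τ z ≤ Lv I τ v := Lv_anti (le_of_lt hz2)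
      have : (τ.symm x : ℕ) < (τ.symm z : ℕ) := hz1
      omega
  · rintro ⟨h1, h2, h3⟩
    obtain ⟨j, hj, hje, hvj⟩ := Lv_mem h hv
    refine ⟨h2, h1, τ j, ?_, hvj⟩
    simp only [Equiv.symm_apply_apply]
    rw [Fin.lt_def]; omega

lemma ca_zero_M (h : SMI M I τ) (hv : v ∈ M) : ca τ v = 0 := by
  rw [ca, Finset.card_eq_zero, Finset.filter_eq_empty_iff]
  rintro x _ ⟨_, _, z, hz1, hz2⟩
  have hi : τ.symm v ∈ I := (mem_M_iff h).1 hv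
  have := smi_lt h hi hz1
  simp only [Equiv.apply_symm_apply] at this
  exact absurd hz2 (lt_asymm this)

lemma ci_zero_M (h : SMI M I τ) (hv : v ∈ M) : ci τ v = 0 := by
  rw [ci, Finset.card_eq_zero, Finset.filter_eq_empty_iff]
  rintro x _ ⟨hx1, _, z, hz1, hz2⟩
  have hi : τ.symm v ∈ I := (mem_M_iff h).1 hv
  have := smi_lt h hi (lt_trans hx1 hz1)
  simp only [Equiv.apply_symm_apply] at this
  exact absurd hz2 (lt_asymm this)

lemma card_filter_symm (P : Fin n → Prop) [DecidablePred P] :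
    (univ.filter fun x : Fin n => P (τ.symm x)).card = (univ.filter P).card := by
  apply Finset.card_bij (fun x _ => τ.symm x)
  · intro a ha
    simp only [Finset.mem_filter, Finset.mem_univ, true_and] at ha ⊢
    exact ha
  · intro a _ b _ hab
    exact τ.symm.injective hab
  · intro b hb
    refine ⟨τ b, ?_, by simp⟩
    simp only [Finset.mem_filter, Finset.mem_univ, true_and, Equiv.symm_apply_apply]
    exact (Finset.mem_filter.1 hb).2

lemma key_sum (h : SMI M I τ) (hv : v ∉ M) :
    caS τ v + ciP I τ v + (univ.filter fun x => v < x).card = Lv I τ v := by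
  obtain ⟨j0, hj0, hj0e, hvj0⟩ := Lv_mem h hv
  have hLvn : Lv I τ v < n := hj0e ▸ j0.isLt
  set L : ℕ := Lv I τ v with hL
  set W : Finset (Fin n) := univ.filter fun x => (τ.symm x : ℕ) ≤ L with hW
  -- card of W
  have hWcard : W.card = L + 1 := by
    rw [hW, card_filter_symm (fun q : Fin n => (q : ℕ) ≤ L)]
    have : (univ.filter fun q : Fin n => (q : ℕ) ≤ L) = Finset.Iic ⟨L, hLvn⟩ := by
      ext q; simp [Fin.le_def]
    rw [this, Fin.card_Iic]
  -- split W at v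
  have hvW : v ∈ W := by
    simp only [hW, Finset.mem_filter, Finset.mem_univ, true_and]
    exact le_of_lt (pos_lt_Lv h hv)
  have hsplit : (W.filter fun x => x < v).card + (W.filter fun x => ¬ x < v).card = W.card :=
    Finset.card_filter_add_card_filter_not _
  have hge : (W.filter fun x => ¬ x < v) = insert v (W.filter fun x => v < x) := by
    ext x
    simp only [Finset.mem_filter, Finset.mem_insert]
    constructor
    · rintro ⟨hxW, hxv⟩
      rcases lt_trichotomy x v with h' | h' | h'
      · exact absurd h' hxv
      · exact Or.inl h'
      · exact Or.inr ⟨hxW, h'⟩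
    · rintro (h' | ⟨hxW, hxv⟩)
      · subst h'; exact ⟨hvW, lt_irrefl x⟩
      · exact ⟨hxW, lt_asymm hxv⟩
  have hvnot : v ∉ W.filter fun x => v < x := by
    simp only [Finset.mem_filter]
    rintro ⟨_, hc⟩
    exact lt_irrefl v hc
  have hgec : (W.filter fun x => ¬ x < v).card = (W.filter fun x => v < x).card + 1 := by
    rw [hge, Finset.card_insert_of_notMem hvnot]
  have hgt : (W.filter fun x => v < x) = univ.filter fun x => v < x := by
    ext x
    simp only [hW, Finset.mem_filter, Finset.mem_univ, true_and, and_iff_right_iff_imp]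
    intro hvx
    exact gt_pos_le_Lv h hv hvx
  -- the small part
  have hlt : (W.filter fun x => x < v).card = caS τ v + ciP I τ v := by
    have hsplit2 : ((W.filter fun x => x < v).filter fun x => τ.symm x < τ.symm v).card
        + ((W.filter fun x => x < v).filter fun x => ¬ τ.symm x < τ.symm v).card
        = (W.filter fun x => x < v).card :=
      Finset.card_filter_add_card_filter_not _
    have e1 : ((W.filter fun x => x < v).filter fun x => τ.symm x < τ.symm v)
        = univ.filter fun x : Fin n => x < v ∧ τ.symm x < τ.symm v := by
      ext x
      simp only [hW, Finset.filter_filter, Finset.mem_filter, Finset.mem_univ, true_and]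
      constructor
      · rintro ⟨⟨_, h2⟩, h3⟩; exact ⟨h2, h3⟩
      · rintro ⟨h2, h3⟩
        have : (τ.symm x : ℕ) < (τ.symm v : ℕ) := h3
        have := pos_lt_Lv h hv
        exact ⟨⟨by omega, h2⟩, h3⟩
    have e2 : ((W.filter fun x => x < v).filter fun x => ¬ τ.symm x < τ.symm v)
        = univ.filter fun x : Fin n =>
            x < v ∧ τ.symm v < τ.symm x ∧ ((τ.symm x : ℕ) < Lv I τ v) := by
      ext x
      simp only [hW, Finset.filter_filter, Finset.mem_filter, Finset.mem_univ, true_and]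
      constructor
      · rintro ⟨⟨h1, h2⟩, h3⟩
        have hne : τ.symm x ≠ τ.symm v := fun hc => by
          have := τ.symm.injective hc
          subst this; exact lt_irrefl x h2
        have h4 : τ.symm v < τ.symm x := by
          rcases lt_trichotomy (τ.symm x) (τ.symm v) with h' | h' | h'
          · exact absurd h' h3
          · exact absurd h' hne
          · exact h'
        refine ⟨h2, h4, ?_⟩
        have hne2 : (τ.symm x : ℕ) ≠ L := by
          intro hc
          have : τ.symm x = j0 := Fin.ext (by omega)
          have : x = τ j0 := by rw [← this, Equiv.apply_symm_apply]
          rw [this] at h2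
          exact absurd hvj0 (lt_asymm h2)
        omega
      · rintro ⟨h1, h2, h3⟩
        exact ⟨⟨by omega, h1⟩, lt_asymm h2⟩
    rw [e1] at hsplit2
    rw [e2] at hsplit2
    rw [← hsplit2]
    rfl
  have hgtc : (W.filter fun x => v < x).card = (univ.filter fun x => v < x).card := by
    rw [hgt]
  omega

lemma rank_eq (h : SMI M I τ) (hj : j ∈ I) :
    (M.filter fun m => τ j < m).card = (I.filter fun i => i < j).card := by
  symm
  apply Finset.card_bij (fun i _ => τ i)
  · intro i hi
    rw [Finset.mem_filter] at hi ⊢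
    exact ⟨h.2 ▸ Finset.mem_image.2 ⟨i, hi.1, rfl⟩, smi_lt h hi.1 hi.2⟩
  · intro i _ i' _ hii'
    exact τ.injective hii'
  · intro m hm
    rw [Finset.mem_filter] at hm
    have hi : τ.symm m ∈ I := (mem_M_iff h).1 hm.1
    refine ⟨τ.symm m, Finset.mem_filter.2 ⟨hi, ?_⟩, by simp⟩
    have hne : τ.symm m ≠ j := by
      intro hc
      rw [← hc, Equiv.apply_symm_apply] at hm
      exact lt_irrefl m hm.2
    rcases lt_trichotomy (τ.symm m) j with h' | h' | h'
    · exact h'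
    · exact absurd h' hne
    · have := smi_lt h hj h'
      simp only [Equiv.apply_symm_apply] at this
      exact absurd hm.2 (lt_asymm this)

lemma card_filter_gt_lt (ha : a ∈ M) (hb : b ∈ M) (hab : a < b) :
    (M.filter fun m => b < m).card < (M.filter fun m => a < m).card := by
  apply Finset.card_lt_card
  rw [Finset.ssubset_def]
  constructor
  · intro m hm
    rw [Finset.mem_filter] at hm ⊢
    exact ⟨hm.1, lt_trans hab hm.2⟩
  · intro hsub
    have := hsub (Finset.mem_filter.2 ⟨hb, hab⟩)
    exact lt_irrefl b (Finset.mem_filter.1 this).2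

lemma smi_canon (h : SMI M I τ) (h' : SMI M I τ') (hj : j ∈ I) : τ j = τ' j := by
  have h1 : τ j ∈ M := h.2 ▸ Finset.mem_image.2 ⟨j, hj, rfl⟩
  have h2 : τ' j ∈ M := h'.2 ▸ Finset.mem_image.2 ⟨j, hj, rfl⟩
  have heq : (M.filter fun m => τ j < m).card = (M.filter fun m => τ' j < m).card := by
    rw [rank_eq h hj, rank_eq h' hj]
  rcases lt_trichotomy (τ j) (τ' j) with h'' | h'' | h''
  · exact absurd heq (Nat.ne_of_gt (card_filter_gt_lt h1 h2 h''))
  · exact h''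
  · exact absurd heq (Nat.ne_of_lt (card_filter_gt_lt h2 h1 h''))

lemma pos_eq_M (h : SMI M I τ) (h' : SMI M I τ') (hv : v ∈ M) :
    τ.symm v = τ'.symm v := by
  have hi : τ.symm v ∈ I := (mem_M_iff h).1 hv
  have : τ' (τ.symm v) = v := by
    rw [← smi_canon h h' hi, Equiv.apply_symm_apply]
  conv_rhs => rw [← this, Equiv.symm_apply_apply]

lemma Lv_canon (h : SMI M I τ) (h' : SMI M I τ') : Lv I τ v = Lv I τ' v := by
  unfold Lv
  congr 1
  apply Finset.filter_congr
  intro j hj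
  rw [smi_canon h h' hj]

lemma rl_iff (h : SMI M I τ) :
    (¬ ∃ k, j < k ∧ τ j < τ k) ↔ j ∈ I := by
  rw [← h.1 j]
  push_neg
  constructor
  · intro hk i hi
    have hne : τ i ≠ τ j := fun hc => by
      have := τ.injective hc; subst this; exact lt_irrefl i hi
    exact lt_of_le_of_ne (hk i hi) hne
  · intro hk i hi
    exact le_of_lt (hk i hi)

lemma Aminus_eq_sum (h : SMI M I τ) :
    Aminus τ = ∑ j ∈ I, (univ.filter fun i => i < j ∧ τ i < τ j).card := by
  unfold Aminus
  rw [Finset.card_eq_sum_card_fiberwise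
    (f := fun p : Fin n × Fin n => p.2) (t := I)
    (fun p hp => (rl_iff h).1 (Finset.mem_filter.1 hp).2.2.2)]
  apply Finset.sum_congr rfl
  intro j hj
  apply Finset.card_bij (fun p _ => p.1)
  · intro p hp
    rw [Finset.mem_filter] at hp
    rw [Finset.mem_filter] at hp
    rw [Finset.mem_filter]
    obtain ⟨⟨_, h1, h2, _⟩, h4⟩ := hp
    rw [h4] at h1 h2
    exact ⟨Finset.mem_univ _, h1, h2⟩
  · intro p hp p' hp' hpp'
    rw [Finset.mem_filter] at hp hp'
    exact Prod.ext hpp' (hp.2.trans hp'.2.symm)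
  · intro i hi
    rw [Finset.mem_filter] at hi
    refine ⟨(i, j), ?_, rfl⟩
    rw [Finset.mem_filter, Finset.mem_filter]
    exact ⟨⟨Finset.mem_univ _, hi.2.1, hi.2.2, (rl_iff h).2 hj⟩, rfl⟩

lemma cnt4 (h : SMI M I τ) (hj : j ∈ I) :
    (univ.filter fun i => i < j ∧ τ i < τ j).card
      + (univ.filter fun x => τ j < x).card = (j : ℕ) := by
  have hsplit : ((univ.filter fun i : Fin n => i < j).filter fun i => τ i < τ j).card
      + ((univ.filter fun i : Fin n => i < j).filter fun i => ¬ τ i < τ j).card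
      = (univ.filter fun i : Fin n => i < j).card :=
    Finset.card_filter_add_card_filter_not _
  have hIio : (univ.filter fun i : Fin n => i < j) = Finset.Iio j := by
    ext i; simp
  have e0 : (univ.filter fun i : Fin n => i < j).card = (j : ℕ) := by
    rw [hIio, Fin.card_Iio]
  have e1 : ((univ.filter fun i : Fin n => i < j).filter fun i => τ i < τ j)
      = univ.filter fun i => i < j ∧ τ i < τ j := by
    rw [Finset.filter_filter]
  have e2 : ((univ.filter fun i : Fin n => i < j).filter fun i => ¬ τ i < τ j).card
      = (univ.filter fun x => τ j < x).card := by
    apply Finset.card_bij (fun i _ => τ i)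
    · intro i hi
      simp only [Finset.filter_filter, Finset.mem_filter, Finset.mem_univ, true_and] at hi ⊢
      have hne : τ i ≠ τ j := fun hc => by
        have := τ.injective hc; subst this; exact lt_irrefl i hi.1
      rcases lt_trichotomy (τ i) (τ j) with h' | h' | h'
      · exact absurd h' hi.2
      · exact absurd h' hne
      · exact h'
    · intro i _ i' _ hii'
      exact τ.injective hii'
    · intro x hx
      simp only [Finset.mem_filter, Finset.mem_univ, true_and] at hx
      refine ⟨τ.symm x, ?_, by simp⟩
      simp only [Finset.filter_filter, Finset.mem_filter, Finset.mem_univ, true_and]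
      have hne : τ.symm x ≠ j := fun hc => by
        rw [← hc, Equiv.apply_symm_apply] at hx
        exact lt_irrefl x hx
      have hlt : τ.symm x < j := by
        rcases lt_trichotomy (τ.symm x) j with h' | h' | h'
        · exact h'
        · exact absurd h' hne
        · have := smi_lt h hj h'
          simp only [Equiv.apply_symm_apply] at this
          exact absurd hx (lt_asymm this)
      refine ⟨hlt, ?_⟩
      simp only [Equiv.apply_symm_apply]
      exact lt_asymm hx
  rw [e1] at hsplit
  omega

lemma Aminus_const (h : SMI M I τ) (h' : SMI M I τ') : Aminus τ = Aminus τ' := by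
  rw [Aminus_eq_sum h, Aminus_eq_sum h']
  apply Finset.sum_congr rfl
  intro j hj
  have c1 := cnt4 h hj
  have c2 := cnt4 h' hj
  have e : (univ.filter fun x => τ j < x).card = (univ.filter fun x => τ' j < x).card := by
    rw [smi_canon h h' hj]
  omega

lemma swap_symm_apply : (τ * Equiv.swap a b).symm w = Equiv.swap a b (τ.symm w) := by
  rw [Equiv.Perm.mul_def, Equiv.symm_trans_apply, Equiv.symm_swap]

lemma swap_apply : (τ * Equiv.swap a b) w = τ (Equiv.swap a b w) :=
  Equiv.Perm.mul_apply τ _ w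

/-- the key bookkeeping lemma: swapping a value `v` with the previous smaller
value `u` (all values in between being larger than `v`) decreases `caS v` by one
and fixes all other `caS` values. -/
lemma swap_caS (hab : a < b) (huv : τ a < τ b)
    (hbet : ∀ r, a < r → r < b → τ b < τ r) :
    (caS (τ * Equiv.swap a b) (τ b)) + 1 = caS τ (τ b)
      ∧ ∀ x, x ≠ τ b → caS (τ * Equiv.swap a b) x = caS τ x := by
  set u := τ a with hu
  set v := τ b with hv
  set τ' := τ * Equiv.swap a b with hτ'
  have hps : ∀ w, τ'.symm w = Equiv.swap a b (τ.symm w) := fun w => swap_symm_apply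
  have hpu : τ.symm u = a := by rw [hu, Equiv.symm_apply_apply]
  have hpv : τ.symm v = b := by rw [hv, Equiv.symm_apply_apply]
  have hpu' : τ'.symm u = b := by rw [hps, hpu, Equiv.swap_apply_left]
  have hpv' : τ'.symm v = a := by rw [hps, hpv, Equiv.swap_apply_right]
  have huvne : u ≠ v := fun hc => lt_irrefl u (hc ▸ huv)
  have hvala : ∀ w, τ.symm w = a → w = u := fun w hw => by
    rw [← τ.apply_symm_apply w, hw, ← hu]
  have hvalb : ∀ w, τ.symm w = b → w = v := fun w hw => by
    rw [← τ.apply_symm_apply w, hw, ← hv]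
  -- positions of other small values lie outside [a, b]
  have hout : ∀ w, w < v → w ≠ u → (τ.symm w < a ↔ τ.symm w < b) := by
    intro w hwv hwu
    have hwa : τ.symm w ≠ a := fun hc => hwu (hvala w hc)
    have hwb : τ.symm w ≠ b := fun hc => (lt_irrefl v) (by rw [hvalb w hc] at hwv; exact hwv)
    constructor
    · intro h'; exact lt_trans h' hab
    · intro h'
      rcases lt_trichotomy (τ.symm w) a with h2 | h2 | h2
      · exact h2
      · exact absurd h2 hwa
      · have := hbet (τ.symm w) h2 (lt_of_le_of_ne (le_of_lt h') hwb)
        rw [Equiv.apply_symm_apply] at this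
        exact absurd hwv (lt_asymm this)
  have hswap_ne : ∀ w, w ≠ u → w ≠ v → τ'.symm w = τ.symm w := by
    intro w hwu hwv
    rw [hps]
    apply Equiv.swap_apply_of_ne_of_ne
    · exact fun hc => hwu (hvala w hc)
    · exact fun hc => hwv (hvalb w hc)
  constructor
  · -- x = v : the filter loses exactly u
    have hset : (univ.filter fun w : Fin n => w < v ∧ τ'.symm w < τ'.symm v)
        = (univ.filter fun w : Fin n => w < v ∧ τ.symm w < τ.symm v).erase u := by
      ext w
      simp only [Finset.mem_erase, Finset.mem_filter, Finset.mem_univ, true_and]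
      rw [hpv', hpv]
      constructor
      · rintro ⟨h1, h2⟩
        have hwu : w ≠ u := by
          intro hc
          rw [hc, hpu'] at h2
          exact absurd h2 (lt_asymm hab)
        rw [hswap_ne w hwu (fun hc => lt_irrefl w (hc ▸ h1))] at h2
        exact ⟨hwu, h1, (hout w h1 hwu).1 h2⟩
      · rintro ⟨hwu, h1, h2⟩
        rw [hswap_ne w hwu (fun hc => lt_irrefl w (hc ▸ h1))]
        exact ⟨h1, (hout w h1 hwu).2 h2⟩
    have hmem : u ∈ univ.filter fun w : Fin n => w < v ∧ τ.symm w < τ.symm v := by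
      simp only [Finset.mem_filter, Finset.mem_univ, true_and]
      rw [hpu, hpv]
      exact ⟨huv, hab⟩
    unfold caS
    rw [hset, Finset.card_erase_of_mem hmem]
    have : 0 < (univ.filter fun w : Fin n => w < v ∧ τ.symm w < τ.symm v).card :=
      Finset.card_pos.2 ⟨u, hmem⟩
    omega
  · intro x hxv
    by_cases hxu : x = u
    · -- x = u
      unfold caS
      congr 1
      apply Finset.filter_congr
      intro w _
      rw [hxu, hpu', hpu]
      constructor
      · rintro ⟨h1, h2⟩
        have hwu : w ≠ u := fun hc => lt_irrefl w (by rw [← hc] at h1; exact h1)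
        have hwv : w ≠ v := fun hc => lt_irrefl v (by rw [hc] at h1; exact lt_trans h1 huv)
        rw [hswap_ne w hwu hwv] at h2
        exact ⟨h1, (hout w (lt_trans h1 huv) hwu).2 h2⟩
      · rintro ⟨h1, h2⟩
        have hwu : w ≠ u := fun hc => lt_irrefl w (by rw [← hc] at h1; exact h1)
        have hwv : w ≠ v := fun hc => lt_irrefl v (by rw [hc] at h1; exact lt_trans h1 huv)
        rw [hswap_ne w hwu hwv]
        exact ⟨h1, (hout w (lt_trans h1 huv) hwu).1 h2⟩
    · -- x ∉ {u, v}
      have hpx : τ'.symm x = τ.symm x := hswap_ne x hxu hxv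
      have hpxa : τ.symm x ≠ a := fun hc => hxu (hvala x hc)
      have hpxb : τ.symm x ≠ b := fun hc => hxv (hvalb x hc)
      rcases lt_or_gt_of_ne (fun hc : x = v => hxv hc) with hxltv | hxgtv
      · -- x < v : sets are equal
        have hxout : (a < τ.symm x ↔ b < τ.symm x) := by
          have := hout x hxltv hxu
          rcases lt_trichotomy (τ.symm x) a with h2 | h2 | h2
          · constructor
            · intro h3; exact absurd h3 (lt_asymm h2)
            · intro h3; exact absurd (lt_trans hab h3) (lt_asymm h2)
          · exact absurd h2 hpxa
          · have hgb : b < τ.symm x := by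
              rcases lt_trichotomy (τ.symm x) b with h3 | h3 | h3
              · exact absurd h2 (by rw [← this] at h3; exact lt_asymm h3)
              · exact absurd h3 hpxb
              · exact h3
            constructor
            · intro _; exact hgb
            · intro _; exact h2
        unfold caS
        congr 1
        apply Finset.filter_congr
        intro w _
        rw [hpx]
        constructor
        · rintro ⟨h1, h2⟩
          refine ⟨h1, ?_⟩
          by_cases hwu : w = u
          · subst hwu
            rw [hpu'] at h2
            rw [hpu]
            exact hxout.2 h2
          · have hwv : w ≠ v := fun hc => lt_asymm hxltv (by rw [hc] at h1; exact h1)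
            rwa [hswap_ne w hwu hwv] at h2
        · rintro ⟨h1, h2⟩
          refine ⟨h1, ?_⟩
          by_cases hwu : w = u
          · subst hwu
            rw [hpu']
            rw [hpu] at h2
            exact hxout.1 h2
          · have hwv : w ≠ v := fun hc => lt_asymm hxltv (by rw [hc] at h1; exact h1)
            rwa [hswap_ne w hwu hwv]
      · -- v < x : use the value swap u ↔ v as a bijection
        unfold caS
        apply Finset.card_bij (fun w _ => Equiv.swap u v w)
        · intro w hw
          simp only [Finset.mem_filter, Finset.mem_univ, true_and] at hw ⊢
          obtain ⟨h1, h2⟩ := hw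
          rw [hpx] at h2
          by_cases hwu : w = u
          · subst hwu
            rw [Equiv.swap_apply_left]
            rw [hpu'] at h2
            exact ⟨hxgtv, by rw [hpv]; exact h2⟩
          · by_cases hwv : w = v
            · subst hwv
              rw [Equiv.swap_apply_right]
              rw [hpv'] at h2
              exact ⟨lt_trans huv hxgtv, by rw [hpu]; exact h2⟩
            · rw [Equiv.swap_apply_of_ne_of_ne hwu hwv]
              rw [hswap_ne w hwu hwv] at h2
              exact ⟨h1, h2⟩
        · intro w _ w' _ hww'
          exact (Equiv.swap u v).injective hww'
        · intro w hw
          simp only [Finset.mem_filter, Finset.mem_univ, true_and] at hw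
          obtain ⟨h1, h2⟩ := hw
          refine ⟨Equiv.swap u v w, ?_, by simp⟩
          simp only [Finset.mem_filter, Finset.mem_univ, true_and]
          rw [hpx]
          by_cases hwu : w = u
          · subst hwu
            rw [Equiv.swap_apply_left]
            rw [hpu] at h2
            exact ⟨hxgtv, by rw [hpv']; exact h2⟩
          · by_cases hwv : w = v
            · subst hwv
              rw [Equiv.swap_apply_right]
              rw [hpv] at h2
              exact ⟨lt_trans huv hxgtv, by rw [hpu']; exact h2⟩
            · rw [Equiv.swap_apply_of_ne_of_ne hwu hwv]
              rw [hswap_ne w hwu hwv]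
              exact ⟨h1, h2⟩

/-- swapping two non-maximum positions preserves membership in `S_n(M,I)`,
provided the value moving right stays left of its bound. -/
lemma smi_swap (h : SMI M I τ) (hab : a < b) (haI : a ∉ I) (hbI : b ∉ I)
    (hL : (b : ℕ) < Lv I τ (τ a)) : SMI M I (τ * Equiv.swap a b) := by
  set τ' := τ * Equiv.swap a b with hτ'
  have happ : ∀ w, τ' w = τ (Equiv.swap a b w) := fun w => swap_apply
  have hIne : ∀ j, j ∈ I → τ' j = τ j := by
    intro j hj
    rw [happ, Equiv.swap_apply_of_ne_of_ne (fun hc => haI (by rwa [hc] at hj))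
      (fun hc => hbI (by rwa [hc] at hj))]
  have haM : τ a ∉ M := fun hc => haI (by
    have := (mem_M_iff h).1 hc
    rwa [Equiv.symm_apply_apply] at this)
  have hbM : τ b ∉ M := fun hc => hbI (by
    have := (mem_M_iff h).1 hc
    rwa [Equiv.symm_apply_apply] at this)
  constructor
  · intro j
    constructor
    · -- RL max of τ' → j ∈ I
      intro hRL
      by_contra hjI
      -- find a witness i > j with τ' i > τ' j
      by_cases hja : j = a
      · subst hja
        obtain ⟨j₀, hj₀I, hj₀e, hj₀v⟩ := Lv_mem h hbM
        have hj₀gt : (j : ℕ) < (j₀ : ℕ) := by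
          have := pos_lt_Lv h hbM
          rw [Equiv.symm_apply_apply] at this
          omega
        have := hRL j₀ (by rw [Fin.lt_def]; omega)
        rw [hIne j₀ hj₀I, happ, Equiv.swap_apply_left] at this
        exact absurd hj₀v (lt_asymm this)
      · by_cases hjb : j = b
        · subst hjb
          obtain ⟨j₀, hj₀I, hj₀e, hj₀v⟩ := Lv_mem h haM
          have hj₀gt : (j : ℕ) < (j₀ : ℕ) := by omega
          have := hRL j₀ (by rw [Fin.lt_def]; omega)
          rw [hIne j₀ hj₀I, happ, Equiv.swap_apply_right] at this
          exact absurd hj₀v (lt_asymm this)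
        · have hjM : τ j ∉ M := fun hc => hjI (by
            have := (mem_M_iff h).1 hc
            rwa [Equiv.symm_apply_apply] at this)
          obtain ⟨j₀, hj₀I, hj₀e, hj₀v⟩ := Lv_mem h hjM
          have hj₀gt : (j : ℕ) < (j₀ : ℕ) := by
            have := pos_lt_Lv h hjM
            rw [Equiv.symm_apply_apply] at this
            omega
          have := hRL j₀ (by rw [Fin.lt_def]; omega)
          rw [hIne j₀ hj₀I, happ, Equiv.swap_apply_of_ne_of_ne hja hjb] at this
          exact absurd hj₀v (lt_asymm this)
    · -- j ∈ I → RL max of τ'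
      intro hj i hi
      have hja : j ≠ a := fun hc => haI (by rwa [hc] at hj)
      have hjb : j ≠ b := fun hc => hbI (by rwa [hc] at hj)
      rw [hIne j hj, happ]
      by_cases hia : i = a
      · subst hia
        rw [Equiv.swap_apply_left]
        exact smi_lt h hj (lt_trans hi hab)
      · by_cases hib : i = b
        · subst hib
          rw [Equiv.swap_apply_right]
          rcases lt_trichotomy j a with h' | h' | h'
          · exact smi_lt h hj h'
          · exact absurd h' hja
          · obtain ⟨j₀, hj₀I, hj₀e, hj₀v⟩ := Lv_mem h haM
            have hjj₀ : j < j₀ := by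
              rw [Fin.lt_def] at hi ⊢
              omega
            exact lt_trans hj₀v (smi_lt h hj hjj₀)
        · rw [Equiv.swap_apply_of_ne_of_ne hia hib]
          exact smi_lt h hj hi
  · rw [← h.2]
    apply Finset.image_congr
    intro j hj
    exact hIne j hj

lemma move_down (h : SMI M I τ) (hv : v ∉ M) (hc : 0 < caS τ v) :
    ∃ τ', SMI M I τ' ∧ caS τ' v + 1 = caS τ v ∧ ∀ x, x ≠ v → caS τ' x = caS τ x := by
  set b := τ.symm v with hb
  have hvb : τ b = v := τ.apply_symm_apply v
  have hbI : b ∉ I := fun hc' => hv ((mem_M_iff h).2 hc')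
  set A : Finset (Fin n) := univ.filter fun q => q < b ∧ τ q < v with hA
  have hAne : A.Nonempty := by
    rw [caS, Finset.card_pos] at hc
    obtain ⟨x, hx⟩ := hc
    rw [Finset.mem_filter] at hx
    exact ⟨τ.symm x, by
      simp only [hA, Finset.mem_filter, Finset.mem_univ, true_and]
      exact ⟨hx.2.2, by rw [Equiv.apply_symm_apply]; exact hx.2.1⟩⟩
  set a := A.max' hAne with ha
  have haA : a ∈ A := by rw [ha]; exact A.max'_mem hAne
  rw [hA, Finset.mem_filter] at haA
  obtain ⟨-, hab, hav⟩ := haA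
  have hbet : ∀ r, a < r → r < b → τ b < τ r := by
    intro r h1 h2
    have hrb : τ r ≠ τ b := fun hc' => (lt_irrefl r) (by rw [τ.injective hc'] at h2 ⊢; exact h2)
    rcases lt_trichotomy (τ r) (τ b) with h' | h' | h'
    · exfalso
      have : r ∈ A := by
        simp only [hA, Finset.mem_filter, Finset.mem_univ, true_and]
        exact ⟨h2, by rw [← hvb]; exact h'⟩
      exact absurd (A.le_max' r this) (by rw [← ha]; exact not_le.2 h1)
    · exact absurd h' hrb
    · exact h'
  have haI : a ∉ I := by
    intro haI'
    have := smi_lt h haI' hab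
    rw [hvb] at this
    exact absurd hav (lt_asymm this)
  have hL : (b : ℕ) < Lv I τ (τ a) := by
    have h1 : Lv I τ v ≤ Lv I τ (τ a) := Lv_anti (le_of_lt hav)
    have h2 := pos_lt_Lv h hv
    rw [← hb] at h2
    omega
  obtain ⟨e1, e2⟩ := swap_caS hab (by rw [hvb]; exact hav) hbet
  rw [hvb] at e1 e2
  exact ⟨τ * Equiv.swap a b, smi_swap h hab haI hbI hL, e1, e2⟩

lemma move_up (h : SMI M I τ) (hv : v ∉ M) (hc : 0 < ciP I τ v) :
    ∃ τ', SMI M I τ' ∧ caS τ' v = caS τ v + 1 ∧ ∀ x, x ≠ v → caS τ' x = caS τ x := by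
  set b := τ.symm v with hb
  have hvb : τ b = v := τ.apply_symm_apply v
  have hbI : b ∉ I := fun hc' => hv ((mem_M_iff h).2 hc')
  set A : Finset (Fin n) := univ.filter fun q => b < q ∧ τ q < v with hA
  have hex : ∃ x, x < v ∧ τ.symm v < τ.symm x ∧ ((τ.symm x : ℕ) < Lv I τ v) := by
    rw [ciP, Finset.card_pos] at hc
    obtain ⟨x, hx⟩ := hc
    rw [Finset.mem_filter] at hx
    exact ⟨x, hx.2⟩
  obtain ⟨x₀, hx₀1, hx₀2, hx₀3⟩ := hex
  have hAne : A.Nonempty := ⟨τ.symm x₀, by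
    simp only [hA, Finset.mem_filter, Finset.mem_univ, true_and]
    exact ⟨hx₀2, by rw [Equiv.apply_symm_apply]; exact hx₀1⟩⟩
  set q := A.min' hAne with hq
  have hqA : q ∈ A := by rw [hq]; exact A.min'_mem hAne
  rw [hA, Finset.mem_filter] at hqA
  obtain ⟨-, hbq, hqv⟩ := hqA
  have hqLv : (q : ℕ) < Lv I τ v := by
    have h1 : q ≤ τ.symm x₀ := A.min'_le _ (by
      simp only [hA, Finset.mem_filter, Finset.mem_univ, true_and]
      exact ⟨hx₀2, by rw [Equiv.apply_symm_apply]; exact hx₀1⟩)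
    rw [Fin.le_def] at h1
    omega
  have hbet : ∀ r, b < r → r < q → v < τ r := by
    intro r h1 h2
    have hrb : τ r ≠ v := fun hc' => (lt_irrefl r) (by
      have : r = b := by rw [hb, ← hc', Equiv.symm_apply_apply]
      rw [this] at h1 ⊢; exact h1)
    rcases lt_trichotomy (τ r) v with h' | h' | h'
    · exfalso
      have : r ∈ A := by
        simp only [hA, Finset.mem_filter, Finset.mem_univ, true_and]
        exact ⟨h1, h'⟩
      exact absurd (A.min'_le r this) (by rw [← hq]; exact not_le.2 h2)
    · exact absurd h' hrb
    · exact h'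
  have hqI : q ∉ I := by
    intro hqI'
    have hqM : τ q ∈ M := (mem_M_iff h).2 (by rw [Equiv.symm_apply_apply]; exact hqI')
    have := M_pos_gt h hqM hv hqv
    rw [Equiv.symm_apply_apply] at this
    omega
  have hL : (q : ℕ) < Lv I τ (τ b) := by rw [hvb]; exact hqLv
  have hSMI' : SMI M I (τ * Equiv.swap b q) := smi_swap h hbq hbI hqI hL
  set τ'' := τ * Equiv.swap b q with hτ''
  have happb : τ'' b = τ q := by
    rw [hτ'', Equiv.Perm.mul_apply, Equiv.swap_apply_left]
  have happq : τ'' q = v := by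
    rw [hτ'', Equiv.Perm.mul_apply, Equiv.swap_apply_right, hvb]
  have happ_ne : ∀ r, r ≠ b → r ≠ q → τ'' r = τ r := by
    intro r h1 h2
    rw [hτ'', Equiv.Perm.mul_apply, Equiv.swap_apply_of_ne_of_ne h1 h2]
  have hback : τ'' * Equiv.swap b q = τ := by
    rw [hτ'', mul_assoc, Equiv.swap_mul_self, mul_one]
  have hbet'' : ∀ r, b < r → r < q → τ'' q < τ'' r := by
    intro r h1 h2
    rw [happq, happ_ne r (fun hc' => lt_irrefl r (by rw [hc'] at h1 ⊢; exact h1))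
      (fun hc' => lt_irrefl r (by rw [hc'] at h2 ⊢; exact h2))]
    exact hbet r h1 h2
  have huv'' : τ'' b < τ'' q := by
    rw [happb, happq]; exact hqv
  obtain ⟨e1, e2⟩ := swap_caS hbq huv'' hbet''
  rw [hback, happq] at e1 e2
  exact ⟨τ'', hSMI', by omega, fun x hx => (e2 x hx).symm⟩

lemma sum_invariant (h : SMI M I σ) (h' : SMI M I σ') (hv : v ∉ M) :
    caS σ v + ciP I σ v = caS σ' v + ciP I σ' v := by
  have k1 := key_sum h hv
  have k2 := key_sum h' hv
  have := Lv_canon (v := v) h h'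
  omega

lemma reach (d : ℕ) :
    ∀ (σ : Equiv.Perm (Fin n)), SMI M I σ → ∀ (c : Fin n → ℕ),
    (∀ v, v ∉ M → c v ≤ caS σ v + ciP I σ v) →
    (∑ v ∈ univ.filter (fun v : Fin n => v ∉ M),
      ((caS σ v - c v) + (c v - caS σ v)) ≤ d) →
    ∃ σ', SMI M I σ' ∧ ∀ v, v ∉ M → caS σ' v = c v := by
  induction d with
  | zero =>
    intro σ hσ c hadm hd
    refine ⟨σ, hσ, fun v hv => ?_⟩
    have hmem : v ∈ univ.filter (fun v : Fin n => v ∉ M) := by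
      simp only [Finset.mem_filter, Finset.mem_univ, true_and]; exact hv
    have hle := Finset.single_le_sum
      (f := fun v : Fin n => ((caS σ v - c v) + (c v - caS σ v)))
      (fun i _ => Nat.zero_le _) hmem
    omega
  | succ d ih =>
    intro σ hσ c hadm hd
    by_cases hall : ∀ v, v ∉ M → caS σ v = c v
    · exact ⟨σ, hσ, hall⟩
    · push_neg at hall
      obtain ⟨v, hvM, hvne⟩ := hall
      have hvmem : v ∈ univ.filter (fun v : Fin n => v ∉ M) := by
        simp only [Finset.mem_filter, Finset.mem_univ, true_and]; exact hvM
      -- get the new permutation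
      have hstep : ∃ σ'', SMI M I σ'' ∧
          ((caS σ'' v - c v) + (c v - caS σ'' v)) + 1
            = ((caS σ v - c v) + (c v - caS σ v)) ∧
          ∀ x, x ≠ v → caS σ'' x = caS σ x := by
        rcases lt_or_gt_of_ne hvne with hlt | hgt
        · -- caS σ v < c v : move up; need ciP > 0
          have hciP : 0 < ciP I σ v := by
            have := hadm v hvM
            omega
          obtain ⟨σ'', h1, h2, h3⟩ := move_up hσ hvM hciP
          exact ⟨σ'', h1, by omega, h3⟩
        · have hcaS : 0 < caS σ v := by omega
          obtain ⟨σ'', h1, h2, h3⟩ := move_down hσ hvM hcaS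
          exact ⟨σ'', h1, by omega, h3⟩
      obtain ⟨σ'', hσ'', hdist, hother⟩ := hstep
      have hadm'' : ∀ w, w ∉ M → c w ≤ caS σ'' w + ciP I σ'' w := by
        intro w hw
        rw [sum_invariant hσ'' hσ hw]
        exact hadm w hw
      have hsum'' : (∑ w ∈ univ.filter (fun w : Fin n => w ∉ M),
          ((caS σ'' w - c w) + (c w - caS σ'' w))) ≤ d := by
        have e1 : ∀ w ∈ (univ.filter (fun w : Fin n => w ∉ M)).erase v,
            ((caS σ'' w - c w) + (c w - caS σ'' w))
              = ((caS σ w - c w) + (c w - caS σ w)) := by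
          intro w hw
          rw [Finset.mem_erase] at hw
          rw [hother w hw.1]
        have e2 := Finset.sum_erase_add (univ.filter (fun w : Fin n => w ∉ M))
          (fun w => ((caS σ'' w - c w) + (c w - caS σ'' w))) hvmem
        have e3 := Finset.sum_erase_add (univ.filter (fun w : Fin n => w ∉ M))
          (fun w => ((caS σ w - c w) + (c w - caS σ w))) hvmem
        rw [Finset.sum_congr rfl e1] at e2
        omega
      exact ih σ'' hσ'' c hadm'' hsum''

lemma caS_formula (σ : Equiv.Perm (Fin n)) (v : Fin n) :
    caS σ v + (univ.filter fun x => v < x ∧ σ.symm x < σ.symm v).card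
      = (σ.symm v : ℕ) := by
  unfold caS
  have htot : (univ.filter fun x : Fin n => σ.symm x < σ.symm v).card = (σ.symm v : ℕ) := by
    rw [card_filter_symm (fun q : Fin n => q < σ.symm v)]
    have : (univ.filter fun q : Fin n => q < σ.symm v) = Finset.Iio (σ.symm v) := by
      ext q; simp
    rw [this, Fin.card_Iio]
  have hsplit := Finset.card_filter_add_card_filter_not
    (s := univ.filter fun x : Fin n => σ.symm x < σ.symm v) (p := fun x => x < v)
  have e1 : ((univ.filter fun x : Fin n => σ.symm x < σ.symm v).filter fun x => x < v)
      = univ.filter fun x : Fin n => x < v ∧ σ.symm x < σ.symm v := by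
    rw [Finset.filter_filter]
    apply Finset.filter_congr
    intro x _
    tauto
  have e2 : ((univ.filter fun x : Fin n => σ.symm x < σ.symm v).filter fun x => ¬ x < v)
      = univ.filter fun x : Fin n => v < x ∧ σ.symm x < σ.symm v := by
    rw [Finset.filter_filter]
    apply Finset.filter_congr
    intro x _
    constructor
    · rintro ⟨h1, h2⟩
      have hxv : x ≠ v := fun hc => lt_irrefl (σ.symm v) (by rw [hc] at h1; exact h1)
      rcases lt_trichotomy x v with h3 | h3 | h3
      · exact absurd h3 h2
      · exact absurd h3 hxv
      · exact ⟨h3, h1⟩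
    · rintro ⟨h1, h2⟩
      exact ⟨h2, lt_asymm h1⟩
  rw [e1, e2] at hsplit
  omega

lemma caS_lt_aux (hvM : v ∉ M)
    (hgt : ∀ x, v < x → σ.symm x = σ'.symm x)
    (hlt : σ.symm v < σ'.symm v) : caS σ v < caS σ' v := by
  have c1 := caS_formula σ v
  have c2 := caS_formula σ' v
  have hg : (univ.filter fun x => v < x ∧ σ'.symm x < σ'.symm v).card
      = (univ.filter fun x => v < x ∧ σ.symm x < σ'.symm v).card := by
    congr 1
    apply Finset.filter_congr
    intro x _
    constructor
    · rintro ⟨h1, h2⟩; exact ⟨h1, by rw [hgt x h1]; exact h2⟩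
    · rintro ⟨h1, h2⟩; exact ⟨h1, by rw [← hgt x h1]; exact h2⟩
  rw [hg] at c2
  have hsub : (univ.filter fun x => v < x ∧ σ.symm x < σ'.symm v).card
      = (univ.filter fun x => v < x ∧ σ.symm x < σ.symm v).card
        + (univ.filter fun x =>
            (v < x ∧ σ.symm x < σ'.symm v) ∧ ¬ σ.symm x < σ.symm v).card := by
    have hx := Finset.card_filter_add_card_filter_not
      (s := univ.filter fun x : Fin n => v < x ∧ σ.symm x < σ'.symm v)
      (p := fun x => σ.symm x < σ.symm v)
    have ea : ((univ.filter fun x : Fin n => v < x ∧ σ.symm x < σ'.symm v).filter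
        fun x => σ.symm x < σ.symm v)
        = univ.filter fun x : Fin n => v < x ∧ σ.symm x < σ.symm v := by
      rw [Finset.filter_filter]
      apply Finset.filter_congr
      intro x _
      constructor
      · rintro ⟨⟨h1, _⟩, h3⟩; exact ⟨h1, h3⟩
      · rintro ⟨h1, h2⟩; exact ⟨⟨h1, lt_trans h2 hlt⟩, h2⟩
    have eb : ((univ.filter fun x : Fin n => v < x ∧ σ.symm x < σ'.symm v).filter
        fun x => ¬ σ.symm x < σ.symm v)
        = univ.filter fun x : Fin n =>
            (v < x ∧ σ.symm x < σ'.symm v) ∧ ¬ σ.symm x < σ.symm v := by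
      rw [Finset.filter_filter]
    rw [ea, eb] at hx
    omega
  have hbound : (univ.filter fun x =>
      (v < x ∧ σ.symm x < σ'.symm v) ∧ ¬ σ.symm x < σ.symm v).card
      ≤ (σ'.symm v : ℕ) - (σ.symm v : ℕ) - 1 := by
    rw [← Fin.card_Ioo (σ.symm v) (σ'.symm v)]
    apply Finset.card_le_card_of_injOn (fun x => σ.symm x)
    · intro x hx
      rw [Finset.mem_coe, Finset.mem_filter] at hx
      obtain ⟨-, ⟨h1, h2⟩, h3⟩ := hx
      rw [Finset.mem_coe, Finset.mem_Ioo]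
      refine ⟨?_, h2⟩
      have hne : σ.symm x ≠ σ.symm v := fun hc => by
        have := σ.symm.injective hc
        rw [this] at h1
        exact lt_irrefl v h1
      rcases lt_trichotomy (σ.symm x) (σ.symm v) with h4 | h4 | h4
      · exact absurd h4 h3
      · exact absurd h4 hne
      · exact h4
    · intro x _ y _ hxy
      exact σ.symm.injective hxy
  have hplt : (σ.symm v : ℕ) < (σ'.symm v : ℕ) := hlt
  omega

lemma caS_inj (h : SMI M I σ) (h' : SMI M I σ')
    (heq : ∀ v, v ∉ M → caS σ v = caS σ' v) : σ = σ' := by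
  by_contra hne
  set D := univ.filter fun v : Fin n => σ.symm v ≠ σ'.symm v with hD
  have hDne : D.Nonempty := by
    rw [Finset.nonempty_iff_ne_empty]
    intro hDe
    apply hne
    have hall : ∀ v, σ.symm v = σ'.symm v := by
      intro v
      by_contra hvne
      have : v ∈ D := by
        rw [hD, Finset.mem_filter]
        exact ⟨Finset.mem_univ _, hvne⟩
      rw [hDe] at this
      exact absurd this (Finset.notMem_empty v)
    apply Equiv.ext
    intro x
    have e := hall (σ x)
    rw [Equiv.symm_apply_apply] at e
    have := congrArg σ' e
    rw [Equiv.apply_symm_apply] at this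
    exact this.symm
  set v := D.max' hDne with hv
  have hvD : v ∈ D := by rw [hv]; exact D.max'_mem hDne
  rw [hD, Finset.mem_filter] at hvD
  have hvne := hvD.2
  have hvM : v ∉ M := fun hc => hvne (pos_eq_M h h' hc)
  have hgt : ∀ x, v < x → σ.symm x = σ'.symm x := by
    intro x hx
    by_contra hxne
    have : x ∈ D := by
      rw [hD, Finset.mem_filter]
      exact ⟨Finset.mem_univ _, hxne⟩
    exact absurd (D.le_max' x this) (by rw [← hv]; exact not_le.2 hx)
  rcases lt_trichotomy (σ.symm v) (σ'.symm v) with h1 | h1 | h1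
  · exact absurd (heq v hvM) (Nat.ne_of_lt (caS_lt_aux hvM hgt h1))
  · exact hvne h1
  · exact absurd (heq v hvM).symm
      (Nat.ne_of_lt (caS_lt_aux hvM (fun x hx => (hgt x hx).symm) h1))

lemma exists_partner (h : SMI M I τ) :
    ∃ σ, SMI M I σ ∧ ∀ v, v ∉ M → caS σ v = ciP I τ v :=
  reach _ τ h (fun v => ciP I τ v) (fun v _ => Nat.le_add_left _ _) le_rfl

noncomputable def Rt (M I : Finset (Fin n))
    (t : {τ : Equiv.Perm (Fin n) // SMI M I τ}) : {τ : Equiv.Perm (Fin n) // SMI M I τ} :=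
  ⟨(exists_partner t.2).choose, (exists_partner t.2).choose_spec.1⟩

lemma Rt_caS (t : {τ : Equiv.Perm (Fin n) // SMI M I τ}) (hv : v ∉ M) :
    caS (Rt M I t).1 v = ciP I t.1 v :=
  (exists_partner t.2).choose_spec.2 v hv

lemma Rt_ciP (t : {τ : Equiv.Perm (Fin n) // SMI M I τ}) (hv : v ∉ M) :
    ciP I (Rt M I t).1 v = caS t.1 v := by
  have h1 := Rt_caS t hv
  have h2 := sum_invariant (Rt M I t).2 t.2 hv
  omega

lemma Rt_invol (t : {τ : Equiv.Perm (Fin n) // SMI M I τ}) :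
    Rt M I (Rt M I t) = t := by
  apply Subtype.ext
  apply caS_inj (Rt M I (Rt M I t)).2 t.2
  intro v hv
  rw [Rt_caS (Rt M I t) hv, Rt_ciP t hv]

lemma partOne (M I : Finset (Fin n)) :
    ∃ ψ : {τ : Equiv.Perm (Fin n) // SMI M I τ} → {τ : Equiv.Perm (Fin n) // SMI M I τ},
      (∀ τ, ψ (ψ τ) = τ) ∧
      (∀ τ : {τ : Equiv.Perm (Fin n) // SMI M I τ}, ∀ y : Fin n, y ∉ M →
        ca τ.1 y = ci (ψ τ).1 y ∧ ci τ.1 y = ca (ψ τ).1 y) ∧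
      (∀ τ : {τ : Equiv.Perm (Fin n) // SMI M I τ}, Aminus τ.1 = Aminus (ψ τ).1) := by
  refine ⟨Rt M I, Rt_invol, fun t y hy => ?_, fun t => Aminus_const t.2 (Rt M I t).2⟩
  constructor
  · rw [ca_eq_caS t.2 hy, ci_eq_ciP (Rt M I t).2 hy, Rt_ciP t hy]
  · rw [ci_eq_ciP t.2 hy, ca_eq_caS (Rt M I t).2 hy, Rt_caS t hy]

lemma pairs_card_eq (P : Fin n → Fin n → Prop) [∀ a b, Decidable (P a b)] :
    (univ.filter fun p : Fin n × Fin n => P (τ p.1) (τ p.2)).card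
      = (univ.filter fun p : Fin n × Fin n => P p.1 p.2).card := by
  apply Finset.card_bij (fun p _ => ((τ p.1, τ p.2) : Fin n × Fin n))
  · intro p hp
    rw [Finset.mem_filter] at hp ⊢
    exact ⟨Finset.mem_univ _, hp.2⟩
  · intro p hp p' hp' he
    have h1 : τ p.1 = τ p'.1 := congrArg Prod.fst he
    have h2 : τ p.2 = τ p'.2 := congrArg Prod.snd he
    exact Prod.ext (τ.injective h1) (τ.injective h2)
  · intro q hq
    rw [Finset.mem_filter] at hq
    refine ⟨(τ.symm q.1, τ.symm q.2), ?_, by simp⟩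
    rw [Finset.mem_filter]
    refine ⟨Finset.mem_univ _, ?_⟩
    simpa using hq.2

lemma sum_ci_eq (τ : Equiv.Perm (Fin n)) : ∑ y : Fin n, ci τ y = Iplus τ := by
  have h1 : Iplus τ = (univ.filter fun p : Fin n × Fin n =>
      τ.symm p.1 < τ.symm p.2 ∧ p.2 < p.1 ∧
        ∃ z, τ.symm p.2 < τ.symm z ∧ p.1 < z).card := by
    unfold Iplus
    rw [← pairs_card_eq (τ := τ)
      (P := fun a b => τ.symm a < τ.symm b ∧ b < a ∧ ∃ z, τ.symm b < τ.symm z ∧ a < z)]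
    congr 1
    apply Finset.filter_congr
    intro p _
    simp only [Equiv.symm_apply_apply]
    constructor
    · rintro ⟨h1, h2, k, hk1, hk2⟩
      exact ⟨h1, h2, τ k, by simpa using hk1, hk2⟩
    · rintro ⟨h1, h2, z, hz1, hz2⟩
      exact ⟨h1, h2, τ.symm z, hz1, by simpa using hz2⟩
  rw [h1]
  rw [Finset.card_eq_sum_card_fiberwise
    (f := fun p : Fin n × Fin n => p.1) (t := univ) (fun p _ => Finset.mem_univ _)]
  apply Finset.sum_congr rfl
  intro y _
  unfold ci
  apply Finset.card_bij (fun (x : Fin n) _ => ((y, x) : Fin n × Fin n))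
  · intro x hx
    rw [Finset.mem_filter] at hx
    rw [Finset.mem_filter, Finset.mem_filter]
    exact ⟨⟨Finset.mem_univ _, hx.2⟩, rfl⟩
  · intro x hx x' hx' he
    exact congrArg Prod.snd he
  · intro p hp
    rw [Finset.mem_filter] at hp
    obtain ⟨hp1, hp2⟩ := hp
    rw [Finset.mem_filter] at hp1
    obtain ⟨-, h1, h2, h3⟩ := hp1
    rw [hp2] at h1 h2 h3
    refine ⟨p.2, ?_, by rw [← hp2]⟩
    rw [Finset.mem_filter]
    exact ⟨Finset.mem_univ _, h1, h2, h3⟩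

lemma noninv_split (τ : Equiv.Perm (Fin n)) :
    (univ.filter fun p : Fin n × Fin n => p.1 < p.2 ∧ τ p.1 < τ p.2).card
      = Aminus τ + ∑ y : Fin n, ca τ y := by
  have hsplit := Finset.card_filter_add_card_filter_not
    (s := univ.filter fun p : Fin n × Fin n => p.1 < p.2 ∧ τ p.1 < τ p.2)
    (p := fun p => ∃ k, p.2 < k ∧ τ p.2 < τ k)
  have eA : ((univ.filter fun p : Fin n × Fin n => p.1 < p.2 ∧ τ p.1 < τ p.2).filter
      fun p => ¬ ∃ k, p.2 < k ∧ τ p.2 < τ k) = (univ.filter fun p : Fin n × Fin n =>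
      p.1 < p.2 ∧ τ p.1 < τ p.2 ∧ ¬ ∃ k : Fin n, p.2 < k ∧ τ p.2 < τ k) := by
    rw [Finset.filter_filter]
    apply Finset.filter_congr
    intro p _
    tauto
  have eB : ((univ.filter fun p : Fin n × Fin n => p.1 < p.2 ∧ τ p.1 < τ p.2).filter
      fun p => ∃ k, p.2 < k ∧ τ p.2 < τ k).card = ∑ y : Fin n, ca τ y := by
    have e1 : ((univ.filter fun p : Fin n × Fin n => p.1 < p.2 ∧ τ p.1 < τ p.2).filter
        fun p => ∃ k, p.2 < k ∧ τ p.2 < τ k).card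
        = (univ.filter fun q : Fin n × Fin n =>
            τ.symm q.1 < τ.symm q.2 ∧ q.1 < q.2 ∧
              ∃ z, τ.symm q.2 < τ.symm z ∧ q.2 < z).card := by
      rw [Finset.filter_filter]
      rw [← pairs_card_eq (τ := τ)
        (P := fun a b => τ.symm a < τ.symm b ∧ a < b ∧ ∃ z, τ.symm b < τ.symm z ∧ b < z)]
      congr 1
      apply Finset.filter_congr
      intro p _
      simp only [Equiv.symm_apply_apply]
      constructor
      · rintro ⟨⟨h1, h2⟩, k, hk1, hk2⟩
        exact ⟨h1, h2, τ k, by simpa using hk1, hk2⟩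
      · rintro ⟨h1, h2, z, hz1, hz2⟩
        exact ⟨⟨h1, h2⟩, τ.symm z, hz1, by simpa using hz2⟩
    rw [e1]
    rw [Finset.card_eq_sum_card_fiberwise
      (f := fun p : Fin n × Fin n => p.2) (t := univ) (fun p _ => Finset.mem_univ _)]
    apply Finset.sum_congr rfl
    intro y _
    symm
    unfold ca
    apply Finset.card_bij (fun (x : Fin n) _ => ((x, y) : Fin n × Fin n))
    · intro x hx
      rw [Finset.mem_filter] at hx
      rw [Finset.mem_filter, Finset.mem_filter]
      exact ⟨⟨Finset.mem_univ _, hx.2⟩, rfl⟩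
    · intro x hx x' hx' he
      exact congrArg Prod.fst he
    · intro p hp
      rw [Finset.mem_filter] at hp
      obtain ⟨hp1, hp2⟩ := hp
      rw [Finset.mem_filter] at hp1
      obtain ⟨-, h1, h2, h3⟩ := hp1
      rw [hp2] at h1 h2 h3
      refine ⟨p.1, ?_, by rw [← hp2]⟩
      rw [Finset.mem_filter]
      exact ⟨Finset.mem_univ _, h1, h2, h3⟩
  unfold Aminus
  rw [← eA, ← eB]
  omega

lemma rev_card_inv (π : Equiv.Perm (Fin n)) :
    (univ.filter fun p : Fin n × Fin n =>
      p.1 < p.2 ∧ (π * @Fin.revPerm n) p.2 < (π * @Fin.revPerm n) p.1).card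
      = (univ.filter fun p : Fin n × Fin n => p.1 < p.2 ∧ π p.1 < π p.2).card := by
  apply Finset.card_bij
    (fun (p : Fin n × Fin n) _ => ((Fin.revPerm p.2, Fin.revPerm p.1) : Fin n × Fin n))
  · intro p hp
    rw [Finset.mem_filter] at hp ⊢
    obtain ⟨-, h1, h2⟩ := hp
    simp only [Equiv.Perm.mul_apply] at h2
    refine ⟨Finset.mem_univ _, ?_, ?_⟩
    · simp only [Fin.revPerm_apply]
      exact Fin.rev_lt_rev.2 h1
    · simpa using h2
  · intro p hp p' hp' he
    have h1 : Fin.revPerm p.2 = Fin.revPerm p'.2 := congrArg Prod.fst he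
    have h2 : Fin.revPerm p.1 = Fin.revPerm p'.1 := congrArg Prod.snd he
    exact Prod.ext (Fin.revPerm.injective h2) (Fin.revPerm.injective h1)
  · intro q hq
    rw [Finset.mem_filter] at hq
    obtain ⟨-, h1, h2⟩ := hq
    refine ⟨(Fin.revPerm q.2, Fin.revPerm q.1), ?_, ?_⟩
    · rw [Finset.mem_filter]
      refine ⟨Finset.mem_univ _, ?_, ?_⟩
      · simp only [Fin.revPerm_apply]
        exact Fin.rev_lt_rev.2 h1
      · simp only [Equiv.Perm.mul_apply, Fin.revPerm_apply, Fin.rev_rev]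
        exact h2
    · simp [Fin.rev_rev]

lemma rev_card_noninv (π : Equiv.Perm (Fin n)) :
    (univ.filter fun p : Fin n × Fin n =>
      p.1 < p.2 ∧ (π * @Fin.revPerm n) p.1 < (π * @Fin.revPerm n) p.2).card
      = (univ.filter fun p : Fin n × Fin n => p.1 < p.2 ∧ π p.2 < π p.1).card := by
  apply Finset.card_bij
    (fun (p : Fin n × Fin n) _ => ((Fin.revPerm p.2, Fin.revPerm p.1) : Fin n × Fin n))
  · intro p hp
    rw [Finset.mem_filter] at hp ⊢
    obtain ⟨-, h1, h2⟩ := hp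
    simp only [Equiv.Perm.mul_apply] at h2
    refine ⟨Finset.mem_univ _, ?_, ?_⟩
    · simp only [Fin.revPerm_apply]
      exact Fin.rev_lt_rev.2 h1
    · simpa using h2
  · intro p hp p' hp' he
    have h1 : Fin.revPerm p.2 = Fin.revPerm p'.2 := congrArg Prod.fst he
    have h2 : Fin.revPerm p.1 = Fin.revPerm p'.1 := congrArg Prod.snd he
    exact Prod.ext (Fin.revPerm.injective h2) (Fin.revPerm.injective h1)
  · intro q hq
    rw [Finset.mem_filter] at hq
    obtain ⟨-, h1, h2⟩ := hq
    refine ⟨(Fin.revPerm q.2, Fin.revPerm q.1), ?_, ?_⟩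
    · rw [Finset.mem_filter]
      refine ⟨Finset.mem_univ _, ?_, ?_⟩
      · simp only [Fin.revPerm_apply]
        exact Fin.rev_lt_rev.2 h1
      · simp only [Equiv.Perm.mul_apply, Fin.revPerm_apply, Fin.rev_rev]
        exact h2
    · simp [Fin.rev_rev]

def Iof (τ : Equiv.Perm (Fin n)) : Finset (Fin n) :=
  univ.filter fun j => ∀ i, j < i → τ i < τ j

def Mof (τ : Equiv.Perm (Fin n)) : Finset (Fin n) := (Iof τ).image τ

lemma smi_self (τ : Equiv.Perm (Fin n)) : SMI (Mof τ) (Iof τ) τ :=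
  ⟨fun j => by simp [Iof], rfl⟩

lemma smi_I_eq (h : SMI M I τ) : I = Iof τ := by
  ext j
  rw [Iof, Finset.mem_filter]
  constructor
  · intro hj
    exact ⟨Finset.mem_univ _, (h.1 j).2 hj⟩
  · intro hj
    exact (h.1 j).1 hj.2

lemma smi_M_eq (h : SMI M I τ) : M = Mof τ := by
  rw [Mof, ← smi_I_eq h, h.2]

noncomputable def Theta (π : Equiv.Perm (Fin n)) : Equiv.Perm (Fin n) :=
  (Rt (Mof π) (Iof π) ⟨π, smi_self π⟩).1

lemma Theta_smi (π : Equiv.Perm (Fin n)) : SMI (Mof π) (Iof π) (Theta π) :=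
  (Rt (Mof π) (Iof π) ⟨π, smi_self π⟩).2

lemma Theta_invol (π : Equiv.Perm (Fin n)) : Theta (Theta π) = π := by
  have e1 : Mof (Theta π) = Mof π := (smi_M_eq (Theta_smi π)).symm
  have e2 : Iof (Theta π) = Iof π := (smi_I_eq (Theta_smi π)).symm
  have key : ∀ (M' I' : Finset (Fin n)), M' = Mof π → I' = Iof π →
      ∀ (h : SMI M' I' (Theta π)), (Rt M' I' ⟨Theta π, h⟩).1 = π := by
    intro M' I' hM' hI' h
    subst hM'; subst hI'
    have he : (⟨Theta π, h⟩ : {τ : Equiv.Perm (Fin n) // SMI (Mof π) (Iof π) τ})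
        = Rt (Mof π) (Iof π) ⟨π, smi_self π⟩ := rfl
    rw [he, Rt_invol]
  exact key _ _ e1 e2 (smi_self (Theta π))

lemma Theta_ci (π : Equiv.Perm (Fin n)) (hy : y ∉ Mof π) :
    ci (Theta π) y = ca π y := by
  rw [ci_eq_ciP (Theta_smi π) hy]
  have h1 : ciP (Iof π) (Theta π) y = caS π y :=
    Rt_ciP (M := Mof π) (I := Iof π) ⟨π, smi_self π⟩ hy
  rw [h1, ← ca_eq_caS (smi_self π) hy]

lemma Theta_mix (π : Equiv.Perm (Fin n)) :
    Aminus (Theta π) + Iplus (Theta π)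
      = (univ.filter fun p : Fin n × Fin n => p.1 < p.2 ∧ π p.1 < π p.2).card := by
  rw [noninv_split π, ← Aminus_const (smi_self π) (Theta_smi π), ← sum_ci_eq (Theta π)]
  congr 1
  apply Finset.sum_congr rfl
  intro y _
  by_cases hy : y ∈ Mof π
  · rw [ci_zero_M (Theta_smi π) hy, ca_zero_M (smi_self π) hy]
  · exact Theta_ci π hy

lemma revPerm_sq : (@Fin.revPerm n) * Fin.revPerm = 1 := by
  ext x
  simp [Equiv.Perm.mul_apply]

lemma final_count (m : ℕ) :
    (univ.filter fun π : Equiv.Perm (Fin n) => Aminus π + Iplus π = m).card =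
      (univ.filter fun π : Equiv.Perm (Fin n) =>
        (univ.filter fun p : Fin n × Fin n => p.1 < p.2 ∧ π p.2 < π p.1).card = m).card := by
  have hmixnon : ∀ π : Equiv.Perm (Fin n),
      Aminus π + Iplus π
        = (univ.filter fun p : Fin n × Fin n =>
            p.1 < p.2 ∧ (Theta π) p.1 < (Theta π) p.2).card := by
    intro π
    have := Theta_mix (Theta π)
    rw [Theta_invol π] at this
    exact this
  apply Finset.card_bij (fun (π : Equiv.Perm (Fin n)) _ => Theta π * Fin.revPerm)
  · intro π hπ
    rw [Finset.mem_filter] at hπ ⊢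
    refine ⟨Finset.mem_univ _, ?_⟩
    rw [rev_card_inv (Theta π), ← hmixnon π]
    exact hπ.2
  · intro π hπ π' hπ' he
    have h1 : Theta π = Theta π' := by
      have := congrArg (fun g => g * (@Fin.revPerm n)) he
      simpa [mul_assoc, revPerm_sq] using this
    have := congrArg Theta h1
    rwa [Theta_invol, Theta_invol] at this
  · intro σ hσ
    rw [Finset.mem_filter] at hσ
    refine ⟨Theta (σ * Fin.revPerm), ?_, ?_⟩
    · rw [Finset.mem_filter]
      refine ⟨Finset.mem_univ _, ?_⟩
      rw [hmixnon (Theta (σ * Fin.revPerm)), Theta_invol, rev_card_noninv σ]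
      exact hσ.2
    · rw [Theta_invol, mul_assoc, revPerm_sq, mul_one]

end MixProof

/-- For every `M, I ⊆ [n]` with `|M| = |I|` and `n ∈ M ∩ I` there is an involution
`ψ` of `S_n(M, I)` with `(ca(π), ci(π)) = (ci(ψπ), ca(ψπ))` which fixes `|A⁻|`;
consequently the statistic `mix = |A⁻| + |I⁺|` is Mahonian, i.e. equidistributed
with the number of inversions over `S_n`. -/

theorem mix_is_mahonian (n : ℕ) (hn : 1 ≤ n) :
    (∀ M I : Finset (Fin n), M.card = I.card →
      (⟨n - 1, by omega⟩ : Fin n) ∈ M → (⟨n - 1, by omega⟩ : Fin n) ∈ I →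
      ∃ ψ : {τ : Equiv.Perm (Fin n) // SMI M I τ} → {τ : Equiv.Perm (Fin n) // SMI M I τ},
        (∀ τ, ψ (ψ τ) = τ) ∧
        (∀ τ, ∀ y : Fin n, y ∉ M →
          ca (τ : {τ // SMI M I τ}).1 y = ci (ψ τ).1 y ∧
          ci (τ : {τ // SMI M I τ}).1 y = ca (ψ τ).1 y) ∧
        (∀ τ, Aminus (τ : {τ // SMI M I τ}).1 = Aminus (ψ τ).1)) ∧
    (∀ m : ℕ,
      (univ.filter fun π : Equiv.Perm (Fin n) => Aminus π + Iplus π = m).card =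
      (univ.filter fun π : Equiv.Perm (Fin n) =>
        (univ.filter fun p : Fin n × Fin n => p.1 < p.2 ∧ π p.2 < π p.1).card = m).card) := by
  constructor
  · intro M I _ _ _
    exact MixProof.partOne M I
  · intro m
    exact MixProof.final_count m
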